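/- The matrix [[1+z, 1],[1+z, 1+z]] does not preserve interlacing: applying it to the interlacing pair (1+z, z) yields the pair (1+3z+z², 1+3z+2z²), and 1+3z+z² does not interlace 1+3z+2z². -/

import Mathlib

open Polynomial

/-- The roots of a real polynomial, listed in ascending order. -/
noncomputable def ascRoots (p : Polynomial ℝ) : List ℝ := p.roots.sort (· ≤ ·)

/-- A real polynomial is real-rooted if it has as many real roots
(with multiplicity) as its degree. -/
def RealRooted (p : Polynomial ℝ) : Prop := p.roots.card = p.natDegree

/-- `Interlaces g f` means `g ≪ f`: both are real-rooted, and either they have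
equal degrees `d` with roots `v_d ≤ u_d ≤ v_{d-1} ≤ ⋯ ≤ v_1 ≤ u_1`, or
`deg f = deg g + 1 = d` with `u_d ≤ v_{d-1} ≤ ⋯ ≤ v_1 ≤ u_1`, where `u` are the
roots of `f` and `v` are the roots of `g` (here written with ascending
indexing). -/
def Interlaces (g f : Polynomial ℝ) : Prop :=
  RealRooted f ∧ RealRooted g ∧
  ((f.natDegree = g.natDegree ∧
      (∀ i, i < f.natDegree → (ascRoots g)[i]! ≤ (ascRoots f)[i]!) ∧
      (∀ i, i + 1 < f.natDegree → (ascRoots f)[i]! ≤ (ascRoots g)[i + 1]!)) ∨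
   (f.natDegree = g.natDegree + 1 ∧
      (∀ i, i < g.natDegree →
        (ascRoots f)[i]! ≤ (ascRoots g)[i]! ∧ (ascRoots g)[i]! ≤ (ascRoots f)[i + 1]!)))


lemma sort_pair (a b : ℝ) (hab : a ≤ b) :
    Multiset.sort (α := ℝ) {a, b} (· ≤ ·) = [a, b] := by
  apply List.Perm.eq_of_pairwise' (r := (· ≤ ·)) (Multiset.pairwise_sort _ _) ?_ (Multiset.coe_eq_coe.mp ?_)
  · simp [hab]
  · rw [Multiset.sort_eq]; rfl

noncomputable def rg : ℝ := (-3 - Real.sqrt 5) / 2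
noncomputable def sg : ℝ := (-3 + Real.sqrt 5) / 2

lemma sqrt5_sq : Real.sqrt 5 * Real.sqrt 5 = 5 := Real.mul_self_sqrt (by norm_num)

lemma hg_fact : (1 + 3 * X + X ^ 2 : ℝ[X]) = (X - C rg) * (X - C sg) := by
  have ha : rg + sg = -3 := by unfold rg sg; ring
  have hb : rg * sg = 1 := by unfold rg sg; field_simp; nlinarith [sqrt5_sq]
  have h3 : ((3:ℝ[X])) = C (-(rg+sg)) := by rw [ha]; norm_num; norm_cast
  have h1 : ((1:ℝ[X])) = C (rg*sg) := by rw [hb]; norm_num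
  rw [h3, h1, map_neg, map_add, map_mul]; ring

lemma hf_fact : (1 + 3 * X + 2 * X ^ 2 : ℝ[X]) = C 2 * ((X - C (-1)) * (X - C (-1/2))) := by
  have h : ∀ c a b : ℝ, C c * ((X - C a) * (X - C b))
      = C (c*(a*b)) + C (-(c*(a+b))) * X + C c * X^2 := by
    intro c a b
    simp only [map_mul, map_neg, map_add]
    ring
  rw [h 2 (-1) (-1/2)]
  norm_num
  norm_cast

lemma roots_g : (1 + 3 * X + X ^ 2 : ℝ[X]).roots = {rg, sg} := by
  rw [hg_fact, roots_mul (mul_ne_zero (X_sub_C_ne_zero rg) (X_sub_C_ne_zero sg)), roots_X_sub_C, roots_X_sub_C]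
  rfl

lemma roots_f : (1 + 3 * X + 2 * X ^ 2 : ℝ[X]).roots = {-1, -1/2} := by
  rw [hf_fact, roots_C_mul _ (by norm_num),
    roots_mul (mul_ne_zero (X_sub_C_ne_zero (-1)) (X_sub_C_ne_zero (-1/2))), roots_X_sub_C, roots_X_sub_C]
  rfl

lemma sqrt5_gt : (2:ℝ) < Real.sqrt 5 := by
  nlinarith [sqrt5_sq, Real.sqrt_nonneg 5]


theorem stmt5 :
    Interlaces (1 + X) (X : Polynomial ℝ) ∧
    (1 + X) * (1 + X) + 1 * X = (1 + 3 * X + X ^ 2 : Polynomial ℝ) ∧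
    (1 + X) * (1 + X) + (1 + X) * X = (1 + 3 * X + 2 * X ^ 2 : Polynomial ℝ) ∧
    ¬ Interlaces (1 + 3 * X + X ^ 2 : Polynomial ℝ) (1 + 3 * X + 2 * X ^ 2) := by
  have h1X : ((1 : ℝ[X]) + X).roots = {-1} := by
    rw [show (1 : ℝ[X]) + X = X - C (-1) by simp; ring, roots_X_sub_C]
  have hdeg1X : ((1 : ℝ[X]) + X).natDegree = 1 := by compute_degree!
  have hdegg : (1 + 3 * X + X ^ 2 : ℝ[X]).natDegree = 2 := by compute_degree!
  have hdegf : (1 + 3 * X + 2 * X ^ 2 : ℝ[X]).natDegree = 2 := by compute_degree!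
  refine ⟨⟨?_, ?_, Or.inl ⟨?_, ?_, ?_⟩⟩, by ring, by ring, ?_⟩
  · simp [RealRooted, roots_X]
  · simp [RealRooted, h1X, hdeg1X]
  · simp [natDegree_X, hdeg1X]
  · intro i hi
    rw [natDegree_X] at hi
    interval_cases i
    simp [ascRoots, h1X, roots_X]
  · intro i hi
    rw [natDegree_X] at hi
    omega
  · rintro ⟨-, -, h | h⟩
    · obtain ⟨-, h, -⟩ := h
      have := h 1 (by rw [hdegf]; norm_num)
      rw [ascRoots, ascRoots, roots_f, roots_g,
        sort_pair rg sg (by unfold rg sg; nlinarith [Real.sqrt_nonneg 5]),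
        sort_pair (-1) (-1/2) (by norm_num)] at this
      simp only [List.getElem!_cons_succ, List.getElem!_cons_zero] at this
      unfold sg at this
      nlinarith [sqrt5_gt]
    · rw [hdegf, hdegg] at h
      omega
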